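/- arXiv:1912.11821 — 2 statements merged into one kernel-verified Lean document; each statement's English description precedes it below -/
import Mathlib

section
/- Let a, b, c be real numbers with a < 1, b > 0, c > 0 and b ≠ c. Then ∑_{n=0}^∞ (n+1)·(a)_n (b)_n (c)_n / ((b+1)_n (c+1)_n · n!) = (b c Γ(1−a)/(c−b)) · [ (1−b)Γ(b)/Γ(1−a+b) − (1−c)Γ(c)/Γ(1−a+c) ]. -/
noncomputable section

/-- Pochhammer symbol `(x)_n` for a complex number. -/
def poch (x : ℂ) (n : ℕ) : ℂ := ∏ k ∈ Finset.range n, (x + k)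

/-- Pochhammer symbol `(x)_n` for a real number. -/
def pochR (x : ℝ) (n : ℕ) : ℝ := ∏ k ∈ Finset.range n, (x + k)

/-- The open unit disc in `ℂ`. -/
def unitDisc : Set ℂ := {z : ℂ | ‖z‖ < 1}

/-- The class `A` of analytic functions on the unit disc normalized by
`f 0 = 0`, `f' 0 = 1` (i.e. `f z = z + ∑_{n≥2} a_n z^n`). -/
def memA (f : ℂ → ℂ) : Prop :=
  AnalyticOnNhd ℂ f unitDisc ∧ f 0 = 0 ∧ deriv f 0 = 1

/-- The class `S*_λ`. -/
def starlikeOrder (lam : ℝ) (f : ℂ → ℂ) : Prop :=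
  memA f ∧ (∀ z ∈ unitDisc, z ≠ 0 → f z ≠ 0) ∧
    ∀ z ∈ unitDisc, z ≠ 0 → ‖z * deriv f z / f z - 1‖ < lam

/-- The class `C_λ`: `f ∈ A` and `z ↦ z f'(z)` is in `S*_λ`. -/
def convexOrder (lam : ℝ) (f : ℂ → ℂ) : Prop :=
  memA f ∧ starlikeOrder lam (fun z => z * deriv f z)

/-- Uniformly convex functions. -/
def memUCV (f : ℂ → ℂ) : Prop :=
  memA f ∧ ∀ z ∈ unitDisc, deriv f z ≠ 0 ∧
    ‖z * deriv (deriv f) z / deriv f z‖ <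
      (1 + z * deriv (deriv f) z / deriv f z).re

/-- The class `S_p`. -/
def memSp (f : ℂ → ℂ) : Prop :=
  memA f ∧ (∀ z ∈ unitDisc, z ≠ 0 → f z ≠ 0) ∧
    ∀ z ∈ unitDisc, z ≠ 0 →
      ‖z * deriv f z / f z - 1‖ < (z * deriv f z / f z).re

/-- The class `R(β)`. -/
def memR (beta : ℝ) (f : ℂ → ℂ) : Prop :=
  memA f ∧ ∃ η ∈ Set.Ioo (-(Real.pi / 2)) (Real.pi / 2),
    ∀ z ∈ unitDisc, 0 < (Complex.exp (η * Complex.I) * (deriv f z - beta)).re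

/-- The class `S` of univalent functions in `A`. -/
def memS (f : ℂ → ℂ) : Prop :=
  memA f ∧ Set.InjOn f unitDisc

/-- Taylor coefficient of `f` at the origin. -/
def coeffAt (f : ℂ → ℂ) (n : ℕ) : ℂ := iteratedDeriv n f 0 / n.factorial

/-- Clausen's hypergeometric function `₃F₂(a,b,c;d,e;z)`. -/
def hyp32 (a b c d e z : ℂ) : ℂ :=
  ∑' n : ℕ, poch a n * poch b n * poch c n /
    (poch d n * poch e n * (n.factorial : ℂ)) * z ^ n

/-- The operator `I_{a,b,c}`: Hadamard product of `z ₃F₂(a,b,c;b+1,c+1;z)` with `f`. -/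
def opI (a : ℂ) (b c : ℝ) (f : ℂ → ℂ) (z : ℂ) : ℂ :=
  z + ∑' n : ℕ,
    (poch a (n + 1) * poch (b : ℂ) (n + 1) * poch (c : ℂ) (n + 1) /
      (poch ((b : ℂ) + 1) (n + 1) * poch ((c : ℂ) + 1) (n + 1) *
        ((n + 1).factorial : ℂ))) * coeffAt f (n + 2) * z ^ (n + 2)


section Lemma1Aux

open Set Filter MeasureTheory Finset intervalIntegral

lemma pochR_zero (x : ℝ) : pochR x 0 = 1 := by simp [pochR]

lemma pochR_succ (x : ℝ) (n : ℕ) : pochR x (n + 1) = pochR x n * (x + n) :=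
  Finset.prod_range_succ _ n

lemma pochR_add (x : ℝ) (k m : ℕ) : pochR x (k + m) = pochR x k * pochR (x + k) m := by
  rw [pochR, pochR, pochR, Finset.prod_range_add]
  congr 1
  refine Finset.prod_congr rfl fun i _ => ?_
  push_cast; ring

lemma pochR_one (x : ℝ) : pochR x 1 = x := by simp [pochR]

lemma pochR_nonneg {x : ℝ} (hx : 0 ≤ x) (n : ℕ) : 0 ≤ pochR x n :=
  Finset.prod_nonneg fun i _ => by positivity

lemma pochR_pos {x : ℝ} (hx : 0 < x) (n : ℕ) : 0 < pochR x n :=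
  Finset.prod_pos fun i _ => by positivity

lemma pochR_ratio {x : ℝ} (n : ℕ) : pochR x n * (x + n) = x * pochR (x + 1) n := by
  have h1 : pochR x (n + 1) = pochR x n * (x + n) := pochR_succ x n
  have h2 : pochR x (1 + n) = pochR x 1 * pochR (x + 1) n := by
    simpa using pochR_add x 1 n
  rw [add_comm] at h2
  rw [← h1, h2, pochR_one]

lemma nat_aux (q n : ℕ) : (n + 1) ^ q * (n + q) ≤ (n + 1) * (n + 2) ^ q := by
  induction q with
  | zero => simpa using Nat.le_succ n
  | succ q ih =>
      have h2 : (n + 1) ^ q ≤ (n + 2) ^ q := Nat.pow_le_pow_left (by omega) q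
      calc (n + 1) ^ (q + 1) * (n + (q + 1)) = (n + 1) * ((n + 1) ^ q * (n + q) + (n + 1) ^ q) := by
            ring
        _ ≤ (n + 1) * ((n + 1) * (n + 2) ^ q + (n + 2) ^ q) := by
            exact Nat.mul_le_mul_left _ (Nat.add_le_add ih h2)
        _ = (n + 1) * (n + 2) ^ (q + 1) := by ring

lemma pochR_abs_le (a : ℝ) (q : ℕ) (hq : |a| ≤ q) (n : ℕ) :
    |pochR a n| ≤ (n.factorial : ℝ) * ((n : ℝ) + 1) ^ q := by
  induction n with
  | zero => simp [pochR_zero]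
  | succ n ih =>
      have han : |a + n| ≤ (q : ℝ) + n := by
        calc |a + n| ≤ |a| + n := by
              simpa using abs_add_le a (n : ℝ)
          _ ≤ (q : ℝ) + n := by linarith
      have hcast : ((n : ℝ) + 1) ^ q * ((n : ℝ) + q) ≤ ((n : ℝ) + 1) * ((n : ℝ) + 2) ^ q := by
        exact_mod_cast nat_aux q n
      have h0 : (0 : ℝ) ≤ (n.factorial : ℝ) := by positivity
      calc |pochR a (n + 1)| = |pochR a n| * |a + n| := by
            rw [pochR_succ, abs_mul]
        _ ≤ ((n.factorial : ℝ) * ((n : ℝ) + 1) ^ q) * ((q : ℝ) + n) := by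
            exact mul_le_mul ih han (abs_nonneg _) (by positivity)
        _ = (n.factorial : ℝ) * (((n : ℝ) + 1) ^ q * ((n : ℝ) + q)) := by ring
        _ ≤ (n.factorial : ℝ) * (((n : ℝ) + 1) * ((n : ℝ) + 2) ^ q) := by
            exact mul_le_mul_of_nonneg_left hcast h0
        _ = ((n + 1).factorial : ℝ) * (((n + 1 : ℕ) : ℝ) + 1) ^ q := by
            rw [Nat.factorial_succ]; push_cast; ring




lemma summable_poly_geom (q : ℕ) {r : ℝ} (h0 : 0 ≤ r) (h1 : r < 1) :
    Summable (fun n : ℕ => ((n : ℝ) + 1) ^ q * r ^ n) := by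
  rcases eq_or_lt_of_le h0 with h | h
  · apply summable_of_ne_finset_zero (s := {0})
    intro n hn
    have : n ≠ 0 := by simpa using hn
    simp [← h, zero_pow this]
  · have hr1 : ‖r‖ < 1 := by rw [Real.norm_eq_abs, abs_of_pos h]; exact h1
    have h2 : Summable (fun n : ℕ => (n : ℝ) ^ q * r ^ n) :=
      summable_pow_mul_geometric_of_norm_lt_one q hr1
    have h3 : Summable (fun n : ℕ => ((n + 1 : ℕ) : ℝ) ^ q * r ^ (n + 1)) :=
      (summable_nat_add_iff 1).2 h2
    have h4 := h3.mul_right r⁻¹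
    refine h4.congr fun n => ?_
    push_cast
    field_simp
    ring

section binom

variable {a : ℝ} {q : ℕ}

lemma key_bound (hqa : |a| ≤ (q : ℝ)) (n : ℕ) :
    |pochR a n| / n.factorial ≤ ((n : ℝ) + 1) ^ q := by
  rw [div_le_iff₀ (by positivity)]
  calc |pochR a n| ≤ (n.factorial : ℝ) * ((n : ℝ) + 1) ^ q := pochR_abs_le a q hqa n
    _ = ((n : ℝ) + 1) ^ q * n.factorial := by ring

lemma deriv_bound (hqa : |a| ≤ (q : ℝ)) {R z : ℝ} (hR : 0 < R) (hz : |z| ≤ R) (n : ℕ) :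
    ‖pochR a n / n.factorial * ((n : ℝ) * z ^ (n - 1))‖ ≤
      ((n : ℝ) + 1) ^ (q + 1) * R ^ n * R⁻¹ := by
  rw [Real.norm_eq_abs, abs_mul, abs_div, Nat.abs_cast, abs_mul, Nat.abs_cast, abs_pow]
  match n with
  | 0 => simp; positivity
  | (m + 1) =>
    have h1 : |pochR a (m + 1)| / ((m + 1).factorial : ℝ) ≤ ((m : ℝ) + 2) ^ q := by
      have h := key_bound hqa (m + 1)
      have e : (((m + 1 : ℕ) : ℝ) + 1) = ((m : ℝ) + 2) := by push_cast; ring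
      rwa [e] at h
    have h2 : |z| ^ (m + 1 - 1) ≤ R ^ m := by
      simpa using pow_le_pow_left₀ (abs_nonneg z) hz m
    have hgoal : (((m + 1 : ℕ) : ℝ) + 1) ^ (q + 1) * R ^ (m + 1) * R⁻¹ =
        ((m : ℝ) + 2) ^ (q + 1) * R ^ m := by
      push_cast
      field_simp
      ring
    rw [hgoal]
    calc |pochR a (m + 1)| / ((m + 1).factorial : ℝ) * (((m + 1 : ℕ) : ℝ) * |z| ^ (m + 1 - 1))
        ≤ ((m : ℝ) + 2) ^ q * (((m + 1 : ℕ) : ℝ) * R ^ m) := by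
          refine mul_le_mul h1 (mul_le_mul_of_nonneg_left h2 (by positivity)) (by positivity)
            (by positivity)
      _ = (((m : ℝ) + 2) ^ q * ((m : ℝ) + 1)) * R ^ m := by push_cast; ring
      _ ≤ (((m : ℝ) + 2) ^ q * ((m : ℝ) + 2)) * R ^ m := by
          refine mul_le_mul_of_nonneg_right (mul_le_mul_of_nonneg_left (by linarith)
            (by positivity)) (by positivity)
      _ = ((m : ℝ) + 2) ^ (q + 1) * R ^ m := by rw [pow_succ]

end binom

/-- The binomial series. -/
lemma binomial_hasSum (a : ℝ) {t : ℝ} (h0t : 0 ≤ t) (ht : t < 1) :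
    HasSum (fun n : ℕ => pochR a n / n.factorial * t ^ n) ((1 - t) ^ (-a)) := by
  obtain ⟨q, hq⟩ := exists_nat_ge |a|
  have hsum : ∀ y : ℝ, |y| < 1 → Summable (fun n : ℕ => pochR a n / n.factorial * y ^ n) := by
    intro y hy
    refine Summable.of_norm_bounded (summable_poly_geom q (abs_nonneg y) hy) fun n => ?_
    rw [Real.norm_eq_abs, abs_mul, abs_pow, abs_div, Nat.abs_cast]
    exact mul_le_mul_of_nonneg_right (key_bound hq n) (by positivity)
  set S : ℝ → ℝ := fun y => ∑' n : ℕ, pochR a n / n.factorial * y ^ n with hS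
  have hsumD : ∀ y : ℝ, |y| < 1 →
      Summable (fun n : ℕ => pochR a n / n.factorial * ((n : ℝ) * y ^ (n - 1))) := by
    intro y hy
    set R : ℝ := (|y| + 1) / 2 with hR
    have hR0 : 0 < R := by positivity
    have hR1 : R < 1 := by rw [hR]; linarith
    have hyR : |y| ≤ R := by rw [hR]; linarith
    exact Summable.of_norm_bounded ((summable_poly_geom (q + 1) hR0.le hR1).mul_right R⁻¹)
      (deriv_bound hq hR0 hyR)
  -- the derivative of S
  have hder : ∀ y : ℝ, |y| < 1 → HasDerivAt S
      (∑' n : ℕ, pochR a n / n.factorial * ((n : ℝ) * y ^ (n - 1))) y := by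
    intro y hy
    set R : ℝ := (|y| + 1) / 2 with hR
    have hR0 : 0 < R := by positivity
    have hR1 : R < 1 := by rw [hR]; linarith
    have hyR : |y| < R := by rw [hR]; linarith
    have hmem : y ∈ Ioo (-R) R := abs_lt.mp hyR |>.imp id id |> fun h => ⟨h.1, h.2⟩
    refine hasDerivAt_tsum_of_isPreconnected
      (g := fun (n : ℕ) (z : ℝ) => pochR a n / n.factorial * z ^ n)
      (g' := fun (n : ℕ) (z : ℝ) => pochR a n / n.factorial * ((n : ℝ) * z ^ (n - 1)))
      ((summable_poly_geom (q + 1) hR0.le hR1).mul_right R⁻¹) isOpen_Ioo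
      (convex_Ioo _ _).isPreconnected
      (fun n z _ => (hasDerivAt_pow n z).const_mul _)
      (fun n z hz => deriv_bound hq hR0 (by
        rw [abs_le]; exact ⟨hz.1.le, hz.2.le⟩) n)
      (by constructor <;> [linarith; exact hR0] : (0 : ℝ) ∈ Ioo (-R) R)
      (hsum 0 (by simp)) hmem
  -- the ODE: (1 - y) * D y = a * S y
  have hODE : ∀ y : ℝ, |y| < 1 →
      (1 - y) * (∑' n : ℕ, pochR a n / n.factorial * ((n : ℝ) * y ^ (n - 1))) = a * S y := by
    intro y hy
    have hsD := hsumD y hy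
    have hsS := hsum y hy
    have hterm : ∀ n : ℕ,
        pochR a (n + 1) / (n + 1).factorial * (((n + 1 : ℕ) : ℝ) * y ^ (n + 1 - 1))
        = pochR a n / n.factorial * ((a + n) * y ^ n) := by
      intro n
      rw [pochR_succ, Nat.factorial_succ]
      have hf : (n.factorial : ℝ) ≠ 0 := by positivity
      push_cast
      field_simp
    have hD_eq : (∑' n : ℕ, pochR a n / n.factorial * ((n : ℝ) * y ^ (n - 1)))
        = ∑' n : ℕ, pochR a n / n.factorial * ((a + n) * y ^ n) := by
      rw [hsD.tsum_eq_zero_add]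
      simp only [Nat.cast_zero, zero_mul, mul_zero, zero_add]
      exact tsum_congr hterm
    have hcaseH : ∀ n : ℕ, y * (pochR a n / n.factorial * ((n : ℝ) * y ^ (n - 1)))
        = pochR a n / n.factorial * ((n : ℝ) * y ^ n) := by
      intro n
      cases n with
      | zero => simp
      | succ m => simp only [Nat.add_sub_cancel, pow_succ]; push_cast; ring
    have hsH : Summable (fun n : ℕ => pochR a n / n.factorial * ((n : ℝ) * y ^ n)) :=
      (hsD.mul_left y).congr hcaseH
    have hyD : y * (∑' n : ℕ, pochR a n / n.factorial * ((n : ℝ) * y ^ (n - 1)))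
        = ∑' n : ℕ, pochR a n / n.factorial * ((n : ℝ) * y ^ n) := by
      rw [← tsum_mul_left]
      exact tsum_congr hcaseH
    have hsplit : (∑' n : ℕ, pochR a n / n.factorial * ((a + n) * y ^ n))
        = a * S y + ∑' n : ℕ, pochR a n / n.factorial * ((n : ℝ) * y ^ n) := by
      rw [hS]
      rw [← tsum_mul_left, ← Summable.tsum_add (hsS.mul_left a) hsH]
      exact tsum_congr fun n => by ring
    rw [sub_mul, one_mul, hyD]
    rw [hD_eq, hsplit]
    ring
  -- the function (1-z)^a * S z has zero derivative
  have hG : ∀ y : ℝ, |y| < 1 → HasDerivAt (fun z => (1 - z) ^ a * S z) 0 y := by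
    intro y hy
    have h1y : (0 : ℝ) < 1 - y := by have := abs_lt.mp hy; linarith [this.2]
    have hbase : HasDerivAt (fun z : ℝ => 1 - z) (-1) y := by
      simpa using (hasDerivAt_id y).const_sub 1
    have hd1 : HasDerivAt (fun z : ℝ => (1 - z) ^ a) (-1 * a * (1 - y) ^ (a - 1)) y :=
      hbase.rpow_const (Or.inl h1y.ne')
    have hd2 := hder y hy
    have hODEy := hODE y hy
    set d : ℝ := ∑' n : ℕ, pochR a n / n.factorial * ((n : ℝ) * y ^ (n - 1)) with hdd
    have hpow : (1 - y) ^ a = (1 - y) ^ (a - 1) * (1 - y) := by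
      rw [← Real.rpow_add_one h1y.ne' (a - 1), sub_add_cancel]
    have := hd1.mul hd2
    refine this.congr_deriv ?_
    set p : ℝ := (1 - y) ^ (a - 1) with hp
    linear_combination p * hODEy + d * hpow
  -- constancy
  have hconst : (1 - t) ^ a * S t = 1 := by
    have h₀ : ∀ x ∈ Icc (0 : ℝ) t, |x| < 1 := by
      intro x hx
      rw [abs_lt]
      exact ⟨by linarith [hx.1], by linarith [hx.2]⟩
    have hcont : ContinuousOn (fun z => (1 - z) ^ a * S z) (Icc 0 t) := fun x hx =>
      ((hG x (h₀ x hx)).continuousAt).continuousWithinAt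
    have hderiv : ∀ x ∈ Ico (0 : ℝ) t, HasDerivWithinAt (fun z => (1 - z) ^ a * S z) 0 (Ici x) x :=
      fun x hx => ((hG x (h₀ x (Ico_subset_Icc_self hx))).hasDerivWithinAt)
    have hend := constant_of_has_deriv_right_zero hcont hderiv t (right_mem_Icc.mpr h0t)
    rw [hend]
    have hS0 : S 0 = 1 := by
      show (∑' n : ℕ, pochR a n / n.factorial * (0 : ℝ) ^ n) = 1
      rw [tsum_eq_single 0 (by intro n hn; simp [zero_pow hn])]
      simp [pochR_zero]
    rw [hS0]
    simp
  have hval : S t = (1 - t) ^ (-a) := by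
    rw [Real.rpow_neg (by linarith : (0 : ℝ) ≤ 1 - t)]
    exact (inv_eq_of_mul_eq_one_right hconst).symm
  have hfin := (hsum t (abs_lt.mpr ⟨by linarith, ht⟩)).hasSum
  rwa [show (∑' b : ℕ, pochR a b / (b.factorial : ℝ) * t ^ b) = S t from rfl, hval] at hfin


/-- The real Beta integral over `Ioo 0 1`. -/
lemma realBeta_integrable {x y : ℝ} (hx : 0 < x) (hy : 0 < y) :
    IntegrableOn (fun t : ℝ => t ^ (x - 1) * (1 - t) ^ (y - 1)) (Ioo (0 : ℝ) 1) := by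
  have hc : IntervalIntegrable (fun t : ℝ => (t : ℂ) ^ ((x : ℂ) - 1) * ((1 : ℂ) - t) ^ ((y : ℂ) - 1))
      volume 0 1 := Complex.betaIntegral_convergent (by simpa using hx) (by simpa using hy)
  have hc2 : IntegrableOn (fun t : ℝ => (t : ℂ) ^ ((x : ℂ) - 1) * ((1 : ℂ) - t) ^ ((y : ℂ) - 1))
      (Ioo (0 : ℝ) 1) :=
    ((intervalIntegrable_iff_integrableOn_Ioc_of_le (by norm_num)).mp hc).mono_set
      Ioo_subset_Ioc_self
  have heq : ∀ t ∈ Ioo (0 : ℝ) 1,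
      (t : ℂ) ^ ((x : ℂ) - 1) * ((1 : ℂ) - t) ^ ((y : ℂ) - 1)
        = ((t ^ (x - 1) * (1 - t) ^ (y - 1) : ℝ) : ℂ) := by
    intro t ht
    rw [Complex.ofReal_mul, Complex.ofReal_cpow ht.1.le, Complex.ofReal_cpow (by linarith [ht.2])]
    push_cast
    ring
  have hc3 : IntegrableOn (fun t : ℝ => ((t ^ (x - 1) * (1 - t) ^ (y - 1) : ℝ) : ℂ))
      (Ioo (0 : ℝ) 1) := by
    refine hc2.congr_fun heq measurableSet_Ioo
  exact hc3.re.congr (Eventually.of_forall fun t => Complex.ofReal_re _)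

lemma realBeta_value {x y : ℝ} (hx : 0 < x) (hy : 0 < y) :
    ∫ t in Ioo (0 : ℝ) 1, t ^ (x - 1) * (1 - t) ^ (y - 1)
      = Real.Gamma x * Real.Gamma y / Real.Gamma (x + y) := by
  have key : Complex.Gamma x * Complex.Gamma y
      = Complex.Gamma (x + y) * Complex.betaIntegral x y :=
    Complex.Gamma_mul_Gamma_eq_betaIntegral (by simpa using hx) (by simpa using hy)
  have hbeta : Complex.betaIntegral x y
      = ((∫ t in Ioo (0 : ℝ) 1, t ^ (x - 1) * (1 - t) ^ (y - 1) : ℝ) : ℂ) := by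
    rw [Complex.betaIntegral]
    rw [integral_of_le (by norm_num : (0:ℝ) ≤ 1), integral_Ioc_eq_integral_Ioo]
    calc ∫ t in Ioo (0:ℝ) 1, (t : ℂ) ^ ((x:ℂ) - 1) * ((1:ℂ) - t) ^ ((y:ℂ) - 1)
        = ∫ t in Ioo (0:ℝ) 1, ((t ^ (x - 1) * (1 - t) ^ (y - 1) : ℝ) : ℂ) := by
          refine setIntegral_congr_fun measurableSet_Ioo fun t ht => ?_
          rw [Complex.ofReal_mul, Complex.ofReal_cpow ht.1.le,
            Complex.ofReal_cpow (by linarith [ht.2])]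
          push_cast
          ring
      _ = ((∫ t in Ioo (0:ℝ) 1, t ^ (x - 1) * (1 - t) ^ (y - 1) : ℝ) : ℂ) :=
          _root_.integral_ofReal
  rw [hbeta] at key
  have hGxy : Real.Gamma (x + y) ≠ 0 := (Real.Gamma_pos_of_pos (by linarith)).ne'
  have key2 : (Real.Gamma x * Real.Gamma y : ℝ)
      = Real.Gamma (x + y) * ∫ t in Ioo (0 : ℝ) 1, t ^ (x - 1) * (1 - t) ^ (y - 1) := by
    have := key
    rw [← Complex.ofReal_add, Complex.Gamma_ofReal, Complex.Gamma_ofReal,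
      Complex.Gamma_ofReal] at this
    exact_mod_cast this
  field_simp
  linarith [key2]

lemma moment_integrable {e : ℝ} (he : -1 < e) :
    IntegrableOn (fun t : ℝ => t ^ e) (Ioo (0 : ℝ) 1) :=
  ((intervalIntegrable_iff_integrableOn_Ioc_of_le (by norm_num)).mp
    (intervalIntegral.intervalIntegrable_rpow' he)).mono_set Ioo_subset_Ioc_self

lemma moment_value {e : ℝ} (he : -1 < e) :
    ∫ t in Ioo (0 : ℝ) 1, t ^ e = 1 / (e + 1) := by
  have h1 : ∫ t in (0:ℝ)..1, t ^ e = ((1:ℝ) ^ (e + 1) - (0:ℝ) ^ (e + 1)) / (e + 1) :=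
    integral_rpow (Or.inl he)
  rw [integral_of_le (by norm_num : (0:ℝ) ≤ 1), integral_Ioc_eq_integral_Ioo] at h1
  rw [h1, Real.one_rpow, Real.zero_rpow (by linarith : e + 1 ≠ 0)]
  norm_num


lemma beta_hasSum {a b : ℝ} (ha : a < 1) (hb : 0 < b) :
    HasSum (fun n : ℕ => pochR a n / (n.factorial * ((n : ℝ) + b)))
      (Real.Gamma (1 - a) * Real.Gamma b / Real.Gamma (1 - a + b)) := by
  set K : ℕ := ⌈-a⌉₊ with hK
  have haK : 0 ≤ a + K := by
    have := Nat.le_ceil (-a)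
    rw [← hK] at this
    linarith
  have hneg : ∀ k : ℕ, k < K → a + k < 0 := by
    intro k hk
    rw [hK] at hk
    have : (k : ℝ) < -a := Nat.lt_ceil.mp hk
    linarith
  set ε : ℝ := pochR a K with hε
  have hεne : ε ≠ 0 := by
    rw [hε, pochR]
    exact Finset.prod_ne_zero_iff.mpr fun k hk => (hneg k (Finset.mem_range.mp hk)).ne
  set c : ℕ → ℝ := fun m => pochR (a + K) m / (K + m).factorial with hc
  have hc0 : ∀ m, 0 ≤ c m := fun m => div_nonneg (pochR_nonneg haK m) (by positivity)
  set F : ℕ → ℝ → ℝ := fun m t => c m * t ^ ((K : ℝ) + m + b - 1) with hF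
  have hexp : ∀ m : ℕ, (-1 : ℝ) < (K : ℝ) + m + b - 1 := by
    intro m
    have h1 : (0 : ℝ) ≤ (K : ℝ) + m := by positivity
    linarith
  have hFnn : ∀ m, ∀ t ∈ Ioo (0:ℝ) 1, 0 ≤ F m t := by
    intro m t ht
    exact mul_nonneg (hc0 m) (Real.rpow_nonneg ht.1.le _)
  have hFint : ∀ m, IntegrableOn (F m) (Ioo (0:ℝ) 1) := fun m =>
    (moment_integrable (hexp m)).const_mul _
  have hFval : ∀ m, ∫ t in Ioo (0:ℝ) 1, F m t = c m * (1 / ((K : ℝ) + m + b)) := by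
    intro m
    rw [hF]
    simp only []
    rw [MeasureTheory.integral_const_mul, moment_value (hexp m)]
    norm_num
  -- pointwise sum of the tail series
  have hpt : ∀ t ∈ Ioo (0:ℝ) 1, HasSum (fun m => F m t)
      (((1 - t) ^ (-a) - ∑ n ∈ Finset.range K, pochR a n / n.factorial * t ^ n) *
        (t ^ (b - 1) / ε)) := by
    intro t ht
    have hbin := binomial_hasSum a ht.1.le ht.2
    have h1 : HasSum (fun m : ℕ => pochR a (m + K) / (m + K).factorial * t ^ (m + K))
        ((1 - t) ^ (-a) - ∑ n ∈ Finset.range K, pochR a n / n.factorial * t ^ n) :=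
      (hasSum_nat_add_iff (f := fun n : ℕ => pochR a n / n.factorial * t ^ n) K).mpr
        (by rwa [sub_add_cancel])
    have h2 := h1.mul_right (t ^ (b - 1) / ε)
    have hterm : ∀ m : ℕ, pochR a (m + K) / (m + K).factorial * t ^ (m + K) * (t ^ (b - 1) / ε)
        = F m t := by
      intro m
      have e1 : pochR a (m + K) = ε * pochR (a + K) m := by
        rw [add_comm m K, pochR_add]
      have e3 : ((m + K).factorial : ℝ) = ((K + m).factorial : ℝ) := by rw [add_comm]
      have e2 : (t : ℝ) ^ (m + K) * t ^ (b - 1) = t ^ ((K : ℝ) + m + b - 1) := by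
        rw [← Real.rpow_natCast t (m + K), ← Real.rpow_add ht.1]
        congr 1
        push_cast
        ring
      have hfne : ((K + m).factorial : ℝ) ≠ 0 := by positivity
      rw [hF]
      simp only []
      rw [hc]
      simp only []
      rw [e1, e3, ← e2]
      field_simp
    have hfun : (fun m : ℕ => pochR a (m + K) / (m + K).factorial * t ^ (m + K) *
        (t ^ (b - 1) / ε)) = fun m => F m t := funext hterm
    rw [hfun] at h2
    exact h2
  
  -- the bound function
  have h1a : (0 : ℝ) < 1 - a := by linarith
  set M : ℝ := ∑ n ∈ Finset.range K, |pochR a n| / n.factorial with hM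
  set Bd : ℝ → ℝ := fun t => (t ^ (b - 1) * (1 - t) ^ (-a) + M * t ^ (b - 1)) * |ε|⁻¹ with hBd
  have hbeta_int : IntegrableOn (fun t : ℝ => t ^ (b - 1) * (1 - t) ^ (-a)) (Ioo (0:ℝ) 1) := by
    have h := realBeta_integrable hb h1a
    have e : (1 : ℝ) - a - 1 = -a := by ring
    rwa [e] at h
  have hb1 : (-1 : ℝ) < b - 1 := by linarith
  have hBdint : IntegrableOn Bd (Ioo (0:ℝ) 1) := by
    rw [hBd]
    exact ((hbeta_int.add ((moment_integrable hb1).const_mul M)).mul_const _)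
  have hBdle : ∀ t ∈ Ioo (0:ℝ) 1, ∀ N : ℕ, ∑ m ∈ Finset.range N, F m t ≤ Bd t := by
    intro t ht N
    have hv := hpt t ht
    set V := ((1 - t) ^ (-a) - ∑ n ∈ Finset.range K, pochR a n / n.factorial * t ^ n) *
      (t ^ (b - 1) / ε) with hV
    have h1 : ∑ m ∈ Finset.range N, F m t ≤ V :=
      sum_le_hasSum (Finset.range N) (fun m _ => hFnn m t ht) hv
    have h0V : 0 ≤ V := hasSum_le (fun i => hFnn i t ht) hasSum_zero hv
    have hPle : |∑ n ∈ Finset.range K, pochR a n / n.factorial * t ^ n| ≤ M := by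
      refine (Finset.abs_sum_le_sum_abs _ _).trans ?_
      rw [hM]
      refine Finset.sum_le_sum fun n _ => ?_
      rw [abs_mul, abs_div, Nat.abs_cast, abs_pow, abs_of_pos ht.1]
      calc |pochR a n| / n.factorial * t ^ n ≤ |pochR a n| / n.factorial * 1 := by
            refine mul_le_mul_of_nonneg_left ?_ (by positivity)
            exact pow_le_one₀ ht.1.le ht.2.le
        _ = |pochR a n| / n.factorial := mul_one _
    have habs : V ≤ Bd t := by
      rw [← abs_of_nonneg h0V, hV, hBd]
      simp only []
      rw [abs_mul, abs_div, abs_of_nonneg (Real.rpow_nonneg ht.1.le (b - 1)), div_eq_mul_inv]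
      have h2 : |(1 - t) ^ (-a) - ∑ n ∈ Finset.range K, pochR a n / n.factorial * t ^ n|
          ≤ (1 - t) ^ (-a) + M := by
        refine (abs_sub _ _).trans ?_
        rw [abs_of_nonneg (Real.rpow_nonneg (by linarith [ht.2]) (-a))]
        linarith [hPle]
      calc |(1 - t) ^ (-a) - ∑ n ∈ Finset.range K, pochR a n / n.factorial * t ^ n| *
            (t ^ (b - 1) * |ε|⁻¹)
          ≤ ((1 - t) ^ (-a) + M) * (t ^ (b - 1) * |ε|⁻¹) := by
            exact mul_le_mul_of_nonneg_right h2
              (mul_nonneg (Real.rpow_nonneg ht.1.le _) (by positivity))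
        _ = (t ^ (b - 1) * (1 - t) ^ (-a) + M * t ^ (b - 1)) * |ε|⁻¹ := by ring
    linarith
  -- summability of the integrals
  have hQsum : Summable (fun m : ℕ => c m * (1 / ((K : ℝ) + m + b))) := by
    refine summable_of_sum_range_le (c := ∫ t in Ioo (0:ℝ) 1, Bd t)
      (fun m => mul_nonneg (hc0 m) (by positivity)) fun N => ?_
    calc ∑ m ∈ Finset.range N, c m * (1 / ((K : ℝ) + m + b))
        = ∑ m ∈ Finset.range N, ∫ t in Ioo (0:ℝ) 1, F m t :=
          Finset.sum_congr rfl fun m _ => (hFval m).symm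
      _ = ∫ t in Ioo (0:ℝ) 1, ∑ m ∈ Finset.range N, F m t :=
          (integral_finset_sum _ fun m _ => hFint m).symm
      _ ≤ ∫ t in Ioo (0:ℝ) 1, Bd t := by
          refine setIntegral_mono_on (integrable_finset_sum _ fun m _ => hFint m) hBdint
            measurableSet_Ioo fun t ht => hBdle t ht N
  -- exchange sum and integral
  have hmeas : ∀ m : ℕ, AEStronglyMeasurable (F m) (volume.restrict (Ioo (0:ℝ) 1)) := by
    intro m
    refine ContinuousOn.aestronglyMeasurable ?_ measurableSet_Ioo
    refine continuousOn_const.mul ?_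
    exact continuousOn_of_forall_continuousAt fun t ht =>
      Real.continuousAt_rpow_const t _ (Or.inl ht.1.ne')
  have hlint : ∀ m : ℕ, ∫⁻ t, (‖F m t‖₊ : ENNReal) ∂(volume.restrict (Ioo (0:ℝ) 1))
      = ENNReal.ofReal (c m * (1 / ((K : ℝ) + m + b))) := by
    intro m
    have hnn : 0 ≤ᵐ[volume.restrict (Ioo (0:ℝ) 1)] F m :=
      (ae_restrict_iff' measurableSet_Ioo).mpr (Eventually.of_forall fun t ht => hFnn m t ht)
    rw [← hFval m, ofReal_integral_eq_lintegral_ofReal (hFint m) hnn]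
    refine lintegral_congr_ae ?_
    filter_upwards [hnn] with t htn
    rw [← Real.enorm_eq_ofReal htn]
    exact (enorm_eq_nnnorm _).symm
  have hne : (∑' m : ℕ, ∫⁻ t, (‖F m t‖₊ : ENNReal) ∂(volume.restrict (Ioo (0:ℝ) 1))) ≠ ⊤ := by
    have : (∑' m : ℕ, ∫⁻ t, (‖F m t‖₊ : ENNReal) ∂(volume.restrict (Ioo (0:ℝ) 1)))
        = ENNReal.ofReal (∑' m : ℕ, c m * (1 / ((K : ℝ) + m + b))) := by
      rw [ENNReal.ofReal_tsum_of_nonneg (fun m => mul_nonneg (hc0 m) (by positivity)) hQsum]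
      exact tsum_congr hlint
    rw [this]
    exact ENNReal.ofReal_ne_top
  have hexch : ∫ t in Ioo (0:ℝ) 1, (∑' m : ℕ, F m t)
      = ∑' m : ℕ, ∫ t in Ioo (0:ℝ) 1, F m t := integral_tsum hmeas hne
  -- evaluate the integral of the tail sum
  set Q : ℝ := ∑ n ∈ Finset.range K, pochR a n / n.factorial * (1 / ((n : ℝ) + b)) with hQdef
  set Vb : ℝ := Real.Gamma b * Real.Gamma (1 - a) / Real.Gamma (b + (1 - a)) with hVb
  have hQint : ∀ n : ℕ, IntegrableOn (fun t : ℝ => pochR a n / n.factorial * t ^ ((n : ℝ) + b - 1))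
      (Ioo (0:ℝ) 1) := by
    intro n
    refine (moment_integrable ?_).const_mul _
    have : (0:ℝ) ≤ (n : ℝ) := Nat.cast_nonneg n
    linarith
  have hIeq : ∫ t in Ioo (0:ℝ) 1, (∑' m : ℕ, F m t)
      = (∫ t in Ioo (0:ℝ) 1, (t ^ (b - 1) * (1 - t) ^ (-a)
          - ∑ n ∈ Finset.range K, pochR a n / n.factorial * t ^ ((n : ℝ) + b - 1))) * ε⁻¹ := by
    rw [← MeasureTheory.integral_mul_const]
    refine setIntegral_congr_fun measurableSet_Ioo fun t ht => ?_
    rw [(hpt t ht).tsum_eq]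
    have hterm2 : ∀ n : ℕ, (t : ℝ) ^ n * t ^ (b - 1) = t ^ ((n : ℝ) + b - 1) := by
      intro n
      rw [← Real.rpow_natCast t n, ← Real.rpow_add ht.1]
      congr 1
      ring
    have e : ∑ n ∈ Finset.range K, pochR a n / n.factorial * t ^ ((n : ℝ) + b - 1)
        = (∑ n ∈ Finset.range K, pochR a n / n.factorial * t ^ n) * t ^ (b - 1) := by
      rw [Finset.sum_mul]
      refine Finset.sum_congr rfl fun n _ => ?_
      rw [← hterm2 n]
      ring
    rw [e, div_eq_mul_inv]
    ring
  have hIval : ∫ t in Ioo (0:ℝ) 1, (t ^ (b - 1) * (1 - t) ^ (-a)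
      - ∑ n ∈ Finset.range K, pochR a n / n.factorial * t ^ ((n : ℝ) + b - 1)) = Vb - Q := by
    rw [integral_sub hbeta_int (integrable_finset_sum _ fun n _ => hQint n),
      integral_finset_sum _ fun n _ => hQint n]
    congr 1
    · have h := realBeta_value hb h1a
      have e : (1 : ℝ) - a - 1 = -a := by ring
      rw [e] at h
      rw [h, hVb]
    · rw [hQdef]
      refine Finset.sum_congr rfl fun n _ => ?_
      rw [MeasureTheory.integral_const_mul]
      have he : (-1 : ℝ) < (n : ℝ) + b - 1 := by
        have : (0:ℝ) ≤ (n : ℝ) := Nat.cast_nonneg n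
        linarith
      rw [moment_value he]
      norm_num
  -- conclude
  have htsumval : (∑' m : ℕ, c m * (1 / ((K : ℝ) + m + b))) = (Vb - Q) * ε⁻¹ := by
    calc (∑' m : ℕ, c m * (1 / ((K : ℝ) + m + b)))
        = ∑' m : ℕ, ∫ t in Ioo (0:ℝ) 1, F m t := tsum_congr fun m => (hFval m).symm
      _ = ∫ t in Ioo (0:ℝ) 1, (∑' m : ℕ, F m t) := hexch.symm
      _ = (Vb - Q) * ε⁻¹ := by rw [hIeq, hIval]
  have hT : HasSum (fun m : ℕ => c m * (1 / ((K : ℝ) + m + b))) ((Vb - Q) * ε⁻¹) :=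
    htsumval ▸ hQsum.hasSum
  have hT2 := hT.mul_left ε
  have hvv : ε * ((Vb - Q) * ε⁻¹) = Vb - Q := by field_simp
  rw [hvv] at hT2
  have hfK : (fun m : ℕ => ε * (c m * (1 / ((K : ℝ) + m + b))))
      = fun m : ℕ => pochR a (m + K) / ((m + K).factorial * (((m + K : ℕ) : ℝ) + b)) := by
    funext m
    have e1 : pochR a (m + K) = ε * pochR (a + K) m := by
      rw [add_comm m K, hε, ← pochR_add]
    have hfne : (((m + K).factorial : ℝ)) ≠ 0 := by positivity
    have hKb : ((K : ℝ) + m + b) ≠ 0 := by positivity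
    rw [e1, hc]
    simp only []
    rw [add_comm m K]
    push_cast
    field_simp
  rw [hfK] at hT2
  have hfinal := (hasSum_nat_add_iff
    (f := fun n : ℕ => pochR a n / (n.factorial * ((n : ℝ) + b))) K).mp hT2
  have hQeq : ∑ i ∈ Finset.range K, pochR a i / (i.factorial * ((i : ℝ) + b)) = Q := by
    rw [hQdef]
    refine Finset.sum_congr rfl fun i _ => ?_
    rw [div_mul_div_comm, mul_one]
  rw [hQeq, sub_add_cancel] at hfinal
  have : Real.Gamma (1 - a) * Real.Gamma b / Real.Gamma (1 - a + b) = Vb := by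
    rw [hVb, mul_comm, add_comm]
  rwa [this]


end Lemma1Aux

/-- Lemma 1(1): `∑_{n≥0} (n+1)(a)_n(b)_n(c)_n/((b+1)_n(c+1)_n n!)
  = (bcΓ(1-a)/(c-b))·[(1-b)Γ(b)/Γ(1-a+b) - (1-c)Γ(c)/Γ(1-a+c)]`. -/
theorem lemma1_part1 (a b c : ℝ) (ha : a < 1) (hb : 0 < b) (hc : 0 < c)
    (hbc : b ≠ c) :
    HasSum
      (fun n : ℕ => (n + 1 : ℝ) * pochR a n * pochR b n * pochR c n /
        (pochR (b + 1) n * pochR (c + 1) n * (n.factorial : ℝ)))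
      (b * c * Real.Gamma (1 - a) / (c - b) *
        ((1 - b) * Real.Gamma b / Real.Gamma (1 - a + b) -
         (1 - c) * Real.Gamma c / Real.Gamma (1 - a + c))) := by
  have Hb := beta_hasSum ha hb
  have Hc := beta_hasSum ha hc
  have H := ((Hb.mul_left (1 - b)).sub (Hc.mul_left (1 - c))).mul_left (b * c / (c - b))
  have hcb : c - b ≠ 0 := sub_ne_zero.mpr (Ne.symm hbc)
  have hfun : (fun n : ℕ => b * c / (c - b) *
      ((1 - b) * (pochR a n / (n.factorial * ((n : ℝ) + b))) -
       (1 - c) * (pochR a n / (n.factorial * ((n : ℝ) + c)))))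
      = fun n : ℕ => (n + 1 : ℝ) * pochR a n * pochR b n * pochR c n /
        (pochR (b + 1) n * pochR (c + 1) n * (n.factorial : ℝ)) := by
    funext n
    have hnb : (b + (n : ℝ)) ≠ 0 := by positivity
    have hnc : (c + (n : ℝ)) ≠ 0 := by positivity
    have hnb' : ((n : ℝ) + b) ≠ 0 := by positivity
    have hnc' : ((n : ℝ) + c) ≠ 0 := by positivity
    have hnf : (n.factorial : ℝ) ≠ 0 := by positivity
    have hpb : pochR (b + 1) n ≠ 0 := (pochR_pos (by linarith) n).ne'
    have hpc : pochR (c + 1) n ≠ 0 := (pochR_pos (by linarith) n).ne'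
    have eb : pochR b n = b * pochR (b + 1) n / (b + (n : ℝ)) := by
      rw [eq_div_iff hnb]
      exact pochR_ratio n
    have ec : pochR c n = c * pochR (c + 1) n / (c + (n : ℝ)) := by
      rw [eq_div_iff hnc]
      exact pochR_ratio n
    rw [eb, ec]
    field_simp
    ring
  rw [hfun] at H
  have hval : b * c * Real.Gamma (1 - a) / (c - b) *
      ((1 - b) * Real.Gamma b / Real.Gamma (1 - a + b) -
       (1 - c) * Real.Gamma c / Real.Gamma (1 - a + c))
      = b * c / (c - b) *
        ((1 - b) * (Real.Gamma (1 - a) * Real.Gamma b / Real.Gamma (1 - a + b)) -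
         (1 - c) * (Real.Gamma (1 - a) * Real.Gamma c / Real.Gamma (1 - a + c))) := by
    ring
  rwa [hval]


end
end

section
/- Let a ∈ ℂ with 0 < |a| < 1, and let b, c be real with b > 0, c > 0, b ≠ c (so b > |a| − 1 and c > |a| − 1). If (bc/(c−b))·Γ(1−|a|)·[ (1−2b)·Γ(b)/Γ(1−|a|+b) − (1−2c)·Γ(c)/Γ(1−|a|+c) ] ≤ 2, then the function f(z) = z·₃F₂(a,b,c;b+1,c+1;z) belongs to the class S_p. -/
noncomputable section

namespace SpAux

open FormalMultilinearSeries MeasureTheory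

lemma poch_zero (x : ℂ) : poch x 0 = 1 := by simp [poch]
lemma poch_succ (x : ℂ) (n : ℕ) : poch x (n+1) = poch x n * (x + n) := by
  simp [poch, Finset.prod_range_succ]
lemma pochR_zero (x : ℝ) : pochR x 0 = 1 := by simp [pochR]
lemma pochR_succ (x : ℝ) (n : ℕ) : pochR x (n+1) = pochR x n * (x + n) := by
  simp [pochR, Finset.prod_range_succ]

lemma pochR_nonneg {x : ℝ} (hx : 0 ≤ x) (n : ℕ) : 0 ≤ pochR x n := by
  induction n with
  | zero => simp [pochR_zero]
  | succ n ih => rw [pochR_succ]; positivity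

lemma pochR_pos {x : ℝ} (hx : 0 < x) (n : ℕ) : 0 < pochR x n := by
  induction n with
  | zero => simp [pochR_zero]
  | succ n ih => rw [pochR_succ]; positivity

lemma abs_poch_le (a : ℂ) (n : ℕ) : ‖poch a n‖ ≤ pochR (‖a‖) n := by
  induction n with
  | zero => simp [poch_zero, pochR_zero]
  | succ n ih =>
    rw [poch_succ, pochR_succ, norm_mul]
    have h1 : ‖a + n‖ ≤ ‖a‖ + n := by
      simpa using norm_add_le a n
    exact mul_le_mul ih h1 (norm_nonneg _) (pochR_nonneg (norm_nonneg a) n)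

lemma pochR_le_factorial {x : ℝ} (hx0 : 0 ≤ x) (hx1 : x ≤ 1) (n : ℕ) :
    pochR x n ≤ n.factorial := by
  induction n with
  | zero => simp [pochR_zero]
  | succ n ih =>
    rw [pochR_succ, Nat.factorial_succ]
    calc pochR x n * (x + n) ≤ (n.factorial : ℝ) * (n + 1) := by
          apply mul_le_mul ih (by linarith) (by positivity) (by positivity)
      _ = ((n+1) * n.factorial : ℕ) := by push_cast; ring

lemma poch_cast_eq (x : ℝ) (n : ℕ) : poch (x : ℂ) n = (pochR x n : ℂ) := by
  induction n with
  | zero => simp [poch_zero, pochR_zero]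
  | succ n ih => rw [poch_succ, pochR_succ, ih]; push_cast; ring

lemma poch_shift (x : ℂ) (n : ℕ) : poch (x+1) n * x = poch x n * (x + n) := by
  induction n with
  | zero => simp [poch_zero]
  | succ n ih =>
    rw [poch_succ, poch_succ]
    push_cast
    calc poch (x+1) n * (x + 1 + n) * x = (poch (x+1) n * x) * (x + 1 + n) := by ring
      _ = poch x n * (x + n) * (x + 1 + n) := by rw [ih]
      _ = poch x n * (x + n) * (x + (n+1)) := by ring

/-! ### power series package -/

def psum (c : ℕ → ℂ) : ℂ → ℂ := fun z => ∑' n, c n * z ^ n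

lemma mem_ball_iff (z : ℂ) : z ∈ Metric.eball (0:ℂ) 1 ↔ ‖z‖ < 1 := by
  rw [Metric.mem_eball, edist_zero_right, enorm_eq_nnnorm, ← ENNReal.coe_one, ENNReal.coe_lt_coe,
    ← NNReal.coe_lt_coe, coe_nnnorm, NNReal.coe_one]

section psumSec
variable {c : ℕ → ℂ} {C : ℝ}

lemma radius_ge_one (hC : ∀ n, ‖c n‖ ≤ C) : 1 ≤ (ofScalars ℂ c).radius := by
  apply le_radius_of_bound _ C
  intro n
  rw [ofScalars_norm]
  simpa using hC n

lemma hasFPS (hC : ∀ n, ‖c n‖ ≤ C) :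
    HasFPowerSeriesOnBall (psum c) (ofScalars ℂ c) 0 1 := by
  have hr := radius_ge_one hC
  have h := (ofScalars ℂ c).hasFPowerSeriesOnBall (lt_of_lt_of_le one_pos hr)
  have h2 := h.mono one_pos hr
  have : (ofScalars ℂ c).sum = psum c := by
    funext z
    rw [FormalMultilinearSeries.sum, psum]
    exact tsum_congr fun n => by rw [ofScalars_apply_eq, smul_eq_mul]
  rwa [this] at h2

lemma psum_hasSum (hC : ∀ n, ‖c n‖ ≤ C) {z : ℂ} (hz : ‖z‖ < 1) :
    HasSum (fun n => c n * z ^ n) (psum c z) := by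
  have h2 := (hasFPS hC).hasSum ((mem_ball_iff z).2 hz)
  rw [zero_add] at h2
  exact h2.congr_fun fun n => by rw [ofScalars_apply_eq, smul_eq_mul]

lemma psum_analyticOnNhd (hC : ∀ n, ‖c n‖ ≤ C) : AnalyticOnNhd ℂ (psum c) unitDisc := by
  have h := (hasFPS hC).analyticOnNhd
  intro z hz
  exact h z ((mem_ball_iff z).2 hz)

lemma psum_hasSum_mul_deriv (hC : ∀ n, ‖c n‖ ≤ C) {z : ℂ} (hz : ‖z‖ < 1) :
    HasSum (fun (n : ℕ) => ((n:ℂ)+1) * c (n+1) * z ^ (n+1)) (z * deriv (psum c) z) := by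
  have h2 := ((hasFPS hC).fderiv).hasSum ((mem_ball_iff z).2 hz)
  have h3 := (ContinuousLinearMap.apply ℂ ℂ z).hasSum h2
  simp only [ContinuousLinearMap.apply_apply] at h3
  rw [zero_add] at h3
  have h5 : (fderiv ℂ (psum c) z) z = z * deriv (psum c) z := by
    rw [← fderiv_apply_one_eq_deriv]
    conv_rhs => rw [← smul_eq_mul, ← ContinuousLinearMap.map_smul, smul_eq_mul, mul_one]
  rw [h5] at h3
  refine h3.congr_fun fun n => ?_
  rw [derivSeries_apply_diag, ofScalars_apply_eq]
  push_cast [nsmul_eq_mul, smul_eq_mul]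
  ring

lemma psum_hasSum_deriv (hC : ∀ n, ‖c n‖ ≤ C) {z : ℂ} (hz : ‖z‖ < 1) :
    HasSum (fun (n : ℕ) => ((n:ℂ)+1) * c (n+1) * z ^ n) (deriv (psum c) z) := by
  rcases eq_or_ne z 0 with rfl | hz0
  · have hd : deriv (psum c) 0 = c 1 := by
      have := ((hasFPS hC).hasFPowerSeriesAt).deriv
      rw [this, ofScalars_apply_eq]
      simp
    rw [hd]
    have h0 : ((0:ℕ):ℂ) + 1 = 1 := by norm_num
    have := hasSum_single (f := fun (n : ℕ) => ((n:ℂ)+1) * c (n+1) * (0:ℂ) ^ n) 0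
      (fun b hb => by
        obtain ⟨m, rfl⟩ := Nat.exists_eq_succ_of_ne_zero hb
        simp [pow_succ])
    simpa using this
  · have h := (psum_hasSum_mul_deriv hC hz).mul_left z⁻¹
    rw [inv_mul_cancel_left₀ hz0] at h
    refine h.congr_fun fun n => ?_
    field_simp [pow_succ]
    ring


end psumSec

section binomSec
variable (α : ℝ)

/-- coefficients of the binomial series `(1-z)^{-α}`. -/
def bc (k : ℕ) : ℂ := ((pochR α k / k.factorial : ℝ) : ℂ)

lemma bc_rec (k : ℕ) : ((k:ℂ)+1) * bc α (k+1) = (↑α + k) * bc α k := by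
  have hk : ((k:ℝ)+1) * (pochR α (k+1) / (k+1).factorial) = (α + k) * (pochR α k / k.factorial) := by
    rw [pochR_succ, Nat.factorial_succ]
    have h1 : (k.factorial : ℝ) ≠ 0 := by positivity
    field_simp
    push_cast; ring
  rw [bc, bc]
  exact_mod_cast hk

variable (hα0 : 0 < α) (hα1 : α < 1)
include hα0 hα1

lemma bg_norm (k : ℕ) : ‖bc α k‖ ≤ 1 := by
  rw [bc, Complex.norm_real, Real.norm_eq_abs,
    abs_of_nonneg (by exact div_nonneg (pochR_nonneg hα0.le k) (by positivity))]
  rw [div_le_one (by positivity)]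
  exact pochR_le_factorial hα0.le hα1.le k

/-- the complex ODE `(1-z) g' = α g`. -/
lemma bg_ode {z : ℂ} (hz : ‖z‖ < 1) :
    (1 - z) * deriv (psum (bc α)) z = (α : ℂ) * psum (bc α) z := by
  have hC := bg_norm α hα0 hα1
  have h1 := psum_hasSum_deriv hC hz
  have h2 := psum_hasSum_mul_deriv hC hz
  -- shift h2
  have h2' : HasSum (fun (k : ℕ) => (k:ℂ) * bc α k * z ^ k) (z * deriv (psum (bc α)) z) := by
    have h2'' : HasSum (fun (n : ℕ) => ((n+1:ℕ):ℂ) * bc α (n+1) * z ^ (n+1))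
        (z * deriv (psum (bc α)) z) := h2.congr_fun (fun n => by push_cast; ring)
    have h3'' := (hasSum_nat_add_iff (f := fun (k : ℕ) => (k:ℂ) * bc α k * z ^ k)
        (g := z * deriv (psum (bc α)) z) 1).1 h2''
    simpa using h3''
  have h3 := h1.sub h2'
  have h4 := (psum_hasSum hC hz).mul_left (α : ℂ)
  have h5 : HasSum (fun (k : ℕ) => (α:ℂ) * (bc α k * z ^ k))
      (deriv (psum (bc α)) z - z * deriv (psum (bc α)) z) := by
    refine h3.congr_fun fun k => ?_
    have := bc_rec α k
    linear_combination (-(z : ℂ) ^ k) * this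
  have := h5.unique h4
  linear_combination this

lemma bg_zero : psum (bc α) 0 = 1 := by
  have h := psum_hasSum (bg_norm α hα0 hα1) (z := 0) (by simp)
  have h2 := hasSum_single (f := fun (k : ℕ) => bc α k * (0:ℂ) ^ k) 0
    (fun b hb => by obtain ⟨m, rfl⟩ := Nat.exists_eq_succ_of_ne_zero hb; simp [pow_succ])
  have := h.unique h2
  rw [this]
  simp [bc, pochR_zero]

/-- real part has derivative -/
lemma bg_real_hasDerivAt {t : ℝ} (ht : |t| < 1) :
    HasDerivAt (fun x : ℝ => (psum (bc α) ↑x).re) (deriv (psum (bc α)) ↑t).re t := by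
  apply HasDerivAt.real_of_complex
  have h : AnalyticAt ℂ (psum (bc α)) ↑t :=
    psum_analyticOnNhd (bg_norm α hα0 hα1) _ (by simpa [unitDisc] using ht)
  exact h.differentiableAt.hasDerivAt

lemma bg_re_eq {t : ℝ} (ht : t ∈ Set.Ico (0:ℝ) 1) :
    (psum (bc α) ↑t).re = (1 - t) ^ (-α) := by
  obtain ⟨ht0, ht1⟩ := ht
  set S : ℝ → ℝ := fun x => (psum (bc α) ↑x).re with hS
  set F : ℝ → ℝ := fun x => (1 - x) ^ α * S x with hF
  have key : ∀ x, 0 ≤ x → x < 1 → HasDerivAt F 0 x := by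
    intro x hx0 hx1
    have h1x : (0:ℝ) < 1 - x := by linarith
    have hu : HasDerivAt (fun y : ℝ => (1 - y) ^ α) (α * (1-x)^(α-1) * (-1)) x := by
      have hh := Real.hasDerivAt_rpow_const (x := 1 - x) (p := α) (Or.inl h1x.ne')
      have hid : HasDerivAt (fun y : ℝ => 1 - y) (-1) x := (hasDerivAt_id x).const_sub 1
      exact hh.comp x hid
    have hv : HasDerivAt S (deriv (psum (bc α)) ↑x).re x :=
      bg_real_hasDerivAt α hα0 hα1 (by rw [abs_of_nonneg hx0]; exact hx1)
    have hprod := hu.mul hv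
    have hrel : (1 - x) * (deriv (psum (bc α)) ↑x).re = α * S x := by
      have hode := bg_ode α hα0 hα1 (z := ↑x)
        (by rw [Complex.norm_real, Real.norm_eq_abs, abs_of_nonneg hx0]; exact hx1)
      have : ((1 - (x:ℂ)) * deriv (psum (bc α)) ↑x).re = (((α:ℂ)) * psum (bc α) ↑x).re := by
        rw [hode]
      rwa [show (1 - (x:ℂ)) = ((1 - x : ℝ) : ℂ) by push_cast; ring,
        Complex.re_ofReal_mul, Complex.re_ofReal_mul] at this
    have hval : α * (1-x)^(α-1) * (-1) * S x + (1 - x) ^ α * (deriv (psum (bc α)) ↑x).re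
        = 0 := by
      have hsplit : (1-x)^(α-1) * (1-x) = (1-x)^α := by
        nth_rewrite 2 [← Real.rpow_one (1-x)]
        rw [← Real.rpow_add h1x]
        norm_num
      rw [← hsplit]
      linear_combination ((1-x)^(α-1)) * hrel
    rw [← hval]
    exact hprod
  have hcont : ContinuousOn F (Set.Icc 0 t) := by
    intro x hx
    exact ((key x hx.1 (lt_of_le_of_lt hx.2 ht1)).continuousAt).continuousWithinAt
  have hright : ∀ x ∈ Set.Ico (0:ℝ) t, HasDerivWithinAt F 0 (Set.Ici x) x := fun x hx =>
    ((key x hx.1 (lt_trans hx.2 ht1)).hasDerivWithinAt)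
  have hFt := constant_of_has_deriv_right_zero hcont hright t (Set.right_mem_Icc.2 ht0)
  have hF0 : F 0 = 1 := by
    simp only [hF, hS, Complex.ofReal_zero, bg_zero α hα0 hα1]
    norm_num
  have h1t : (0:ℝ) < 1 - t := by linarith
  have hSt : (1 - t) ^ α * S t = 1 := hFt.trans hF0
  rw [Real.rpow_neg h1t.le]
  have hpos : (0:ℝ) < (1-t)^α := Real.rpow_pos_of_pos h1t α
  field_simp at hSt ⊢
  linarith [hSt]

lemma binomial_hasSum {t : ℝ} (ht : t ∈ Set.Ico (0:ℝ) 1) :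
    HasSum (fun k => pochR α k / k.factorial * t ^ k) ((1 - t) ^ (-α)) := by
  have h := psum_hasSum (bg_norm α hα0 hα1) (z := (t:ℂ))
    (by rw [Complex.norm_real, Real.norm_eq_abs, abs_of_nonneg ht.1]; exact ht.2)
  have h2 := Complex.reCLM.hasSum h
  simp only [Complex.reCLM_apply] at h2
  rw [bg_re_eq α hα0 hα1 ht] at h2
  refine h2.congr_fun fun k => ?_
  rw [bc, ← Complex.ofReal_pow, ← Complex.ofReal_mul, Complex.ofReal_re]

-- PART 3
include hα0 hα1

lemma beta_integral_eq (γ : ℝ) (hγ : 0 < γ) :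
    ∫ x in (0:ℝ)..1, x ^ (γ-1) * (1-x) ^ (-α) =
      Real.Gamma γ * Real.Gamma (1-α) / Real.Gamma (γ + (1-α)) := by
  have hs : (0:ℝ) < ((γ:ℂ)).re := by simpa using hγ
  have ht : (0:ℝ) < (((1-α:ℝ):ℂ)).re := by simpa using (by linarith : (0:ℝ) < 1 - α)
  have cG := Complex.Gamma_mul_Gamma_eq_betaIntegral hs ht
  have hbi : Complex.betaIntegral (γ:ℂ) ((1-α:ℝ):ℂ)
      = ((∫ x in (0:ℝ)..1, x ^ (γ-1) * (1-x) ^ (-α) : ℝ) : ℂ) := by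
    rw [Complex.betaIntegral, ← intervalIntegral.integral_ofReal]
    refine intervalIntegral.integral_congr fun x hx => ?_
    rw [Set.uIcc_of_le (by norm_num : (0:ℝ) ≤ 1)] at hx
    obtain ⟨hx0, hx1⟩ := hx
    rw [show ((γ:ℂ) - 1) = ((γ - 1 : ℝ) : ℂ) by push_cast; ring,
      show (((1-α:ℝ):ℂ) - 1) = ((-α : ℝ) : ℂ) by push_cast; ring,
      show ((1:ℂ) - ↑x) = (((1 - x : ℝ)) : ℂ) by push_cast; ring,
      ← Complex.ofReal_cpow hx0, ← Complex.ofReal_cpow (by linarith)]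
    push_cast
    ring
  rw [hbi, show ((γ:ℂ) + ((1-α:ℝ):ℂ)) = ((γ + (1-α) : ℝ) : ℂ) by push_cast; ring,
    Complex.Gamma_ofReal, Complex.Gamma_ofReal, Complex.Gamma_ofReal] at cG
  have hG3 : Real.Gamma (γ + (1-α)) ≠ 0 := (Real.Gamma_pos_of_pos (by linarith)).ne'
  have creal : Real.Gamma γ * Real.Gamma (1-α)
      = Real.Gamma (γ + (1-α)) * ∫ x in (0:ℝ)..1, x ^ (γ-1) * (1-x) ^ (-α) := by
    exact_mod_cast cG
  field_simp
  linarith [creal]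

lemma beta_hasSum (γ : ℝ) (hγ : 0 < γ) :
    HasSum (fun k => pochR α k / (k.factorial * (γ + k)))
      (Real.Gamma γ * Real.Gamma (1-α) / Real.Gamma (γ + (1-α))) := by
  set J : ℝ := Real.Gamma γ * Real.Gamma (1-α) / Real.Gamma (γ + (1-α)) with hJ
  have hJpos : 0 < J := by
    rw [hJ]
    have := Real.Gamma_pos_of_pos hγ
    have := Real.Gamma_pos_of_pos (show (0:ℝ) < 1-α by linarith)
    have := Real.Gamma_pos_of_pos (show (0:ℝ) < γ + (1-α) by linarith)
    positivity
  set u : ℕ → ℝ := fun k => pochR α k / (k.factorial * (γ + k)) with hu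
  have hupos : ∀ k, 0 ≤ u k := fun k => by
    have := pochR_nonneg hα0.le (x := α) k
    have : (0:ℝ) < γ + k := by positivity
    rw [hu]
    positivity
  set g : ℝ → ℝ := fun x => x ^ (γ-1) * (1-x) ^ (-α) with hg
  set fk : ℕ → ℝ → ℝ := fun k x => pochR α k / k.factorial * x ^ (γ + k - 1) with hfk
  -- integrability of each fk on Ioo 0 1
  have hfkint : ∀ k, IntegrableOn (fk k) (Set.Ioo (0:ℝ) 1) volume := by
    intro k
    have h1 : IntervalIntegrable (fun x : ℝ => x ^ (γ + k - 1)) volume 0 1 :=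
      intervalIntegral.intervalIntegrable_rpow' (by push_cast; linarith [Nat.cast_nonneg (α := ℝ) k])
    have := ((intervalIntegrable_iff_integrableOn_Ioo_of_le (by norm_num)).1 h1).const_mul
      (pochR α k / k.factorial)
    exact this
  -- value of each integral
  have hfkval : ∀ k, ∫ x in Set.Ioo (0:ℝ) 1, fk k x = u k := by
    intro k
    have hrpow : ∫ x in (0:ℝ)..1, x ^ (γ + k - 1) = 1 / (γ + k) := by
      rw [integral_rpow (Or.inl (by linarith [Nat.cast_nonneg (α := ℝ) k]))]
      rw [Real.one_rpow, Real.zero_rpow (by linarith [Nat.cast_nonneg (α := ℝ) k] : γ + k - 1 + 1 ≠ 0)]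
      ring_nf
    have h2 : ∫ x in Set.Ioo (0:ℝ) 1, (x : ℝ) ^ (γ + k - 1) = 1 / (γ + k) := by
      rw [← MeasureTheory.integral_Ioc_eq_integral_Ioo, ← intervalIntegral.integral_of_le (by norm_num : (0:ℝ) ≤ 1)]
      exact hrpow
    rw [hfk, hu]
    simp only
    rw [MeasureTheory.integral_const_mul, h2]
    have h3 : (0:ℝ) < γ + k := by positivity
    field_simp
  -- lintegral of each fk
  have hfklint : ∀ k, ∫⁻ x in Set.Ioo (0:ℝ) 1, ENNReal.ofReal (fk k x) = ENNReal.ofReal (u k) := by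
    intro k
    rw [← hfkval k]
    refine (MeasureTheory.ofReal_integral_eq_lintegral_ofReal (hfkint k) ?_).symm
    filter_upwards [ae_restrict_mem measurableSet_Ioo] with x hx
    have : (0:ℝ) ≤ x ^ (γ + k - 1) := Real.rpow_nonneg hx.1.le _
    have h4 := pochR_nonneg hα0.le (x := α) k
    rw [hfk]
    positivity
  -- integrability of g on Ioo 0 1
  have hgint : IntegrableOn g (Set.Ioo (0:ℝ) 1) volume := by
    have hbc := Complex.betaIntegral_convergent (u := (γ:ℂ)) (v := ((1-α:ℝ):ℂ))
      (by simpa using hγ) (by simpa using (by linarith : (0:ℝ) < 1 - α))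
    have h5 := ((intervalIntegrable_iff_integrableOn_Ioo_of_le (by norm_num)).1 hbc).re
    refine MeasureTheory.IntegrableOn.congr_fun h5 ?_ measurableSet_Ioo
    intro x hx
    simp only
    rw [show ((γ:ℂ) - 1) = ((γ - 1 : ℝ) : ℂ) by push_cast; ring,
      show (((1-α:ℝ):ℂ) - 1) = ((-α : ℝ) : ℂ) by push_cast; ring,
      show ((1:ℂ) - ↑x) = (((1 - x : ℝ)) : ℂ) by push_cast; ring,
      ← Complex.ofReal_cpow hx.1.le, ← Complex.ofReal_cpow (by linarith [hx.2] : (0:ℝ) ≤ 1 - x)]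
    rw [← Complex.ofReal_mul]
    simp [hg, RCLike.re_to_complex]
  have hgval : ∫ x in Set.Ioo (0:ℝ) 1, g x = J := by
    rw [← MeasureTheory.integral_Ioc_eq_integral_Ioo,
      ← intervalIntegral.integral_of_le (by norm_num : (0:ℝ) ≤ 1)]
    exact beta_integral_eq α hα0 hα1 γ hγ
  have hglint : ∫⁻ x in Set.Ioo (0:ℝ) 1, ENNReal.ofReal (g x) = ENNReal.ofReal J := by
    rw [← hgval]
    refine (MeasureTheory.ofReal_integral_eq_lintegral_ofReal hgint ?_).symm
    filter_upwards [ae_restrict_mem measurableSet_Ioo] with x hx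
    have h6 : (0:ℝ) ≤ x ^ (γ-1) := Real.rpow_nonneg hx.1.le _
    have h7 : (0:ℝ) ≤ (1-x) ^ (-α) := Real.rpow_nonneg (by linarith [hx.2]) _
    rw [hg]
    positivity
  -- pointwise tsum identity on Ioo
  have hpt : ∀ x ∈ Set.Ioo (0:ℝ) 1, (∑' k, ENNReal.ofReal (fk k x)) = ENNReal.ofReal (g x) := by
    intro x hx
    have hbs := (binomial_hasSum α hα0 hα1 (t := x) ⟨hx.1.le, hx.2⟩).mul_left (x ^ (γ-1))
    have hbs2 : HasSum (fun k => fk k x) (g x) := by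
      refine hbs.congr_fun fun k => ?_
      rw [hfk]
      simp only
      rw [← Real.rpow_natCast x k,
        show γ + (k:ℝ) - 1 = (γ - 1) + (k:ℝ) by ring, Real.rpow_add hx.1]
      ring
    have hnn : ∀ k, 0 ≤ fk k x := fun k => by
      have := pochR_nonneg hα0.le (x := α) k
      have : (0:ℝ) ≤ x ^ (γ + k - 1) := Real.rpow_nonneg hx.1.le _
      rw [hfk]; positivity
    rw [← hbs2.tsum_eq, ENNReal.ofReal_tsum_of_nonneg hnn hbs2.summable]
  -- Tonelli
  have hmeas : ∀ k, AEMeasurable (fun x => ENNReal.ofReal (fk k x)) (volume.restrict (Set.Ioo (0:ℝ) 1)) := by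
    intro k
    apply Measurable.aemeasurable
    apply Measurable.ennreal_ofReal
    rw [hfk]
    simp only
    measurability
  have key : ∑' k, ENNReal.ofReal (u k) = ENNReal.ofReal J := by
    calc ∑' k, ENNReal.ofReal (u k)
        = ∑' k, ∫⁻ x in Set.Ioo (0:ℝ) 1, ENNReal.ofReal (fk k x) := by
          exact (tsum_congr fun k => (hfklint k).symm)
      _ = ∫⁻ x in Set.Ioo (0:ℝ) 1, ∑' k, ENNReal.ofReal (fk k x) :=
          (MeasureTheory.lintegral_tsum hmeas).symm
      _ = ∫⁻ x in Set.Ioo (0:ℝ) 1, ENNReal.ofReal (g x) := by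
          refine MeasureTheory.setLIntegral_congr_fun measurableSet_Ioo ?_
          exact hpt
      _ = ENNReal.ofReal J := hglint
  -- deduce summability and sum
  have hne : ∑' k, ENNReal.ofReal (u k) ≠ ⊤ := by rw [key]; exact ENNReal.ofReal_ne_top
  have hsumm : Summable u := by
    have := ENNReal.summable_toReal hne
    refine this.congr fun k => ?_
    rw [ENNReal.toReal_ofReal (hupos k)]
  have htsum : ∑' k, u k = J := by
    have h8 : ∀ k, ENNReal.ofReal (u k) ≠ ⊤ := fun _ => ENNReal.ofReal_ne_top
    calc ∑' k, u k = ∑' k, (ENNReal.ofReal (u k)).toReal := by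
          exact tsum_congr fun k => (ENNReal.toReal_ofReal (hupos k)).symm
      _ = (∑' k, ENNReal.ofReal (u k)).toReal := (ENNReal.tsum_toReal_eq h8).symm
      _ = (ENNReal.ofReal J).toReal := by rw [key]
      _ = J := ENNReal.toReal_ofReal hJpos.le
  rw [← htsum]
  exact hsumm.hasSum

end binomSec

-- ==== part 4 ====
lemma pochR_shift (x : ℝ) (n : ℕ) : pochR (x+1) n * x = pochR x n * (x + n) := by
  induction n with
  | zero => simp [pochR_zero]
  | succ n ih =>
    rw [pochR_succ, pochR_succ]
    push_cast
    calc pochR (x+1) n * (x + 1 + n) * x = (pochR (x+1) n * x) * (x + 1 + n) := by ring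
      _ = pochR x n * (x + n) * (x + 1 + n) := by rw [ih]
      _ = pochR x n * (x + n) * (x + (n+1)) := by ring

lemma pochR_div {x : ℝ} (hx : 0 < x) (n : ℕ) :
    pochR x n / pochR (x+1) n = x / (x + n) := by
  have h := pochR_shift x n
  have h1 : 0 < pochR (x+1) n := pochR_pos (by linarith) n
  have h3 : (0:ℝ) < x + n := by positivity
  rw [div_eq_div_iff h1.ne' h3.ne']
  linarith [h]

/-- Taylor coefficients of `₃F₂(a,b,c;b+1,c+1;·)`. -/
def Aco (a : ℂ) (b c : ℝ) (n : ℕ) : ℂ :=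
  poch a n * poch (b:ℂ) n * poch (c:ℂ) n /
    (poch ((b:ℂ)+1) n * poch ((c:ℂ)+1) n * (n.factorial : ℂ))

/-- real majorant sequence. -/
def Tr (α b c : ℝ) (n : ℕ) : ℝ := pochR α n / n.factorial * (b/(b+n)) * (c/(c+n))

/-- coefficients of `z ₃F₂(...)`. -/
def fco (a : ℂ) (b c : ℝ) : ℕ → ℂ
  | 0 => 0
  | (n+1) => Aco a b c n

section main
variable {a : ℂ} {b c : ℝ} (hb : 0 < b) (hc : 0 < c)

include hb hc in
lemma Tr_pos (hα0 : 0 < ‖a‖) (n : ℕ) : 0 < Tr (‖a‖) b c n := by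
  have h0 := pochR_pos hα0 n
  have hn := Nat.cast_nonneg (α := ℝ) n
  have h1 : (0:ℝ) < b + n := by linarith
  have h2 : (0:ℝ) < c + n := by linarith
  have h3 : (0:ℝ) < (n.factorial : ℝ) := by positivity
  rw [Tr]; positivity

include hb hc in
lemma Tr_le_one (hα0 : 0 < ‖a‖) (hα1 : ‖a‖ < 1) (n : ℕ) :
    Tr (‖a‖) b c n ≤ 1 := by
  have hn := Nat.cast_nonneg (α := ℝ) n
  have h1 : (0:ℝ) < b + n := by linarith
  have h2 : (0:ℝ) < c + n := by linarith
  have h3 : (0:ℝ) < (n.factorial : ℝ) := by positivity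
  have e1 : pochR (‖a‖) n / n.factorial ≤ 1 := by
    rw [div_le_one h3]; exact pochR_le_factorial hα0.le hα1.le n
  have e2 : b / (b + n) ≤ 1 := by rw [div_le_one h1]; linarith
  have e3 : c / (c + n) ≤ 1 := by rw [div_le_one h2]; linarith
  have p1 : (0:ℝ) ≤ pochR (‖a‖) n / n.factorial :=
    div_nonneg (pochR_nonneg hα0.le n) h3.le
  have p2 : (0:ℝ) ≤ b / (b + n) := by positivity
  have p3 : (0:ℝ) ≤ c / (c + n) := by positivity
  calc pochR (‖a‖) n / n.factorial * (b/(b+n)) * (c/(c+n))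
      ≤ 1 * 1 * 1 := by gcongr
    _ = 1 := by norm_num

include hb hc in
lemma norm_Aco_le (n : ℕ) : ‖Aco a b c n‖ ≤ Tr (‖a‖) b c n := by
  have hb1 : (0:ℝ) < pochR b n := pochR_pos hb n
  have hc1 : (0:ℝ) < pochR c n := pochR_pos hc n
  have hb2 : (0:ℝ) < pochR (b+1) n := pochR_pos (by linarith) n
  have hc2 : (0:ℝ) < pochR (c+1) n := pochR_pos (by linarith) n
  have h3 : (0:ℝ) < (n.factorial : ℝ) := by positivity
  have habs : ∀ (x : ℝ), 0 < x → ‖poch (x:ℂ) n‖ = pochR x n := fun x hx => by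
    rw [poch_cast_eq, Complex.norm_real, Real.norm_eq_abs, abs_of_nonneg (pochR_nonneg hx.le n)]
  have hnorm : ‖Aco a b c n‖ = ‖poch a n‖ * pochR b n * pochR c n /
      (pochR (b+1) n * pochR (c+1) n * n.factorial) := by
    rw [Aco, norm_div, norm_mul, norm_mul, norm_mul, norm_mul]
    rw [habs b hb, habs c hc]
    rw [show ((b:ℂ)+1) = (((b+1 : ℝ)):ℂ) by push_cast; ring,
      show ((c:ℂ)+1) = (((c+1 : ℝ)):ℂ) by push_cast; ring]
    rw [habs (b+1) (by linarith), habs (c+1) (by linarith)]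
    rw [Complex.norm_natCast]
  have hTr : Tr (‖a‖) b c n = pochR (‖a‖) n * pochR b n * pochR c n /
      (pochR (b+1) n * pochR (c+1) n * n.factorial) := by
    rw [Tr, ← pochR_div hb n, ← pochR_div hc n]
    rw [div_mul_div_comm, div_mul_div_comm,
      div_eq_div_iff (mul_pos (mul_pos h3 hb2) hc2).ne' (mul_pos (mul_pos hb2 hc2) h3).ne']
    ring
  rw [hnorm, hTr]
  have hd : (0:ℝ) < pochR (b+1) n * pochR (c+1) n * n.factorial :=
    mul_pos (mul_pos hb2 hc2) h3
  refine (div_le_div_iff_of_pos_right hd).2 ?_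
  have h5 := abs_poch_le a n
  have h6 : (0:ℝ) ≤ ‖poch a n‖ := norm_nonneg _
  nlinarith [mul_pos hb1 hc1]

lemma hasSum_norm_le {f : ℕ → ℂ} {s : ℂ} {g : ℕ → ℝ} (hf : HasSum f s) (hg : Summable g)
    (hle : ∀ n, ‖f n‖ ≤ g n) : ‖s‖ ≤ ∑' n, g n := by
  have h1 : Summable fun n => ‖f n‖ :=
    Summable.of_nonneg_of_le (fun n => norm_nonneg _) hle hg
  calc ‖s‖ = ‖∑' n, f n‖ := by rw [hf.tsum_eq]
    _ ≤ ∑' n, ‖f n‖ := norm_tsum_le_tsum_norm h1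
    _ ≤ ∑' n, g n := Summable.tsum_le_tsum hle h1 hg

end main
end SpAux


/-- Theorem 5.1: `z ₃F₂(a,b,c;b+1,c+1;z)` belongs to `S_p`. -/
theorem thm_sp_hyp (a : ℂ) (b c : ℝ)
    (ha0 : a ≠ 0) (ha : ‖a‖ < 1)
    (hb : 0 < b) (hc : 0 < c) (hbc : b ≠ c)
    (h : b * c / (c - b) * Real.Gamma (1 - ‖a‖) *
        ((1 - 2 * b) * Real.Gamma b / Real.Gamma (1 - ‖a‖ + b) -
         (1 - 2 * c) * Real.Gamma c / Real.Gamma (1 - ‖a‖ + c)) ≤ 2) :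
    memSp
      (fun z => z * hyp32 a (b : ℂ) (c : ℂ) ((b : ℂ) + 1) ((c : ℂ) + 1) z) := by
  have hα0 : 0 < ‖a‖ := norm_pos_iff.2 ha0
  set α := ‖a‖ with hα
  set A : ℕ → ℂ := SpAux.Aco a b c with hA
  set T : ℕ → ℝ := SpAux.Tr α b c with hT
  have hAT : ∀ n, ‖A n‖ ≤ T n := SpAux.norm_Aco_le hb hc
  have hTpos : ∀ n, 0 < T n := SpAux.Tr_pos hb hc hα0
  have hA1 : ∀ n, ‖A n‖ ≤ 1 := fun n => (hAT n).trans (SpAux.Tr_le_one hb hc hα0 ha n)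
  have hA0 : A 0 = 1 := by
    rw [hA, SpAux.Aco]
    simp [SpAux.poch_zero]
  have hfc1 : ∀ n, ‖SpAux.fco a b c n‖ ≤ 1 := by
    intro n
    cases n with
    | zero => simp [SpAux.fco]
    | succ k => simpa [SpAux.fco] using hA1 k
  -- the weight series
  have Sb := SpAux.beta_hasSum α hα0 ha b hb
  have Sc := SpAux.beta_hasSum α hα0 ha c hc
  set Jb := Real.Gamma b * Real.Gamma (1-α) / Real.Gamma (b + (1-α)) with hJb
  set Jc := Real.Gamma c * Real.Gamma (1-α) / Real.Gamma (c + (1-α)) with hJc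
  set L : ℝ := b*c/(c-b) * ((1-2*b)*Jb - (1-2*c)*Jc) with hL
  have hcb : c - b ≠ 0 := sub_ne_zero.2 (Ne.symm hbc)
  have hwsum : HasSum (fun (k:ℕ) => (2*(k:ℝ)+1) * T k) L := by
    have h1 := ((Sb.mul_left (1-2*b)).sub (Sc.mul_left (1-2*c))).mul_left (b*c/(c-b))
    refine h1.congr_fun fun k => ?_
    have hkk := Nat.cast_nonneg (α := ℝ) k
    have hbk : (0:ℝ) < b + k := by linarith
    have hck : (0:ℝ) < c + k := by linarith
    have hfk : (0:ℝ) < (k.factorial:ℝ) := by positivity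
    rw [hT, SpAux.Tr]
    field_simp
    ring
  have hL2 : L ≤ 2 := by
    have e1 : b + (1-α) = 1 - α + b := by ring
    have e2 : c + (1-α) = 1 - α + c := by ring
    calc L = b * c / (c - b) * Real.Gamma (1 - α) *
        ((1 - 2*b) * Real.Gamma b / Real.Gamma (1 - α + b) -
         (1 - 2*c) * Real.Gamma c / Real.Gamma (1 - α + c)) := by
          rw [hL, hJb, hJc, e1, e2]; ring
      _ ≤ 2 := h
  have hT0 : T 0 = 1 := by
    rw [hT, SpAux.Tr, SpAux.pochR_zero]
    simp [hb.ne', hc.ne']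
  have htail : HasSum (fun (k:ℕ) => (2*((k:ℝ)+1)+1) * T (k+1)) (L - 1) := by
    have h2 := (hasSum_nat_add_iff (f := fun (k:ℕ) => (2*(k:ℝ)+1) * T k) (g := L - 1) 1)
    rw [Finset.sum_range_one] at h2
    have h3 : HasSum (fun (k:ℕ) => (2*(k:ℝ)+1) * T k) ((L - 1) + (2*((0:ℕ):ℝ)+1) * T 0) := by
      rw [hT0]
      have he : (L - 1) + (2*((0:ℕ):ℝ)+1) * 1 = L := by push_cast; ring
      rw [he]
      exact hwsum
    have h4 := h2.2 h3
    refine h4.congr_fun fun k => ?_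
    push_cast
    ring
  have hPs : Summable (fun (k:ℕ) => T (k+1)) :=
    Summable.of_nonneg_of_le (fun k => (hTpos _).le)
      (fun k => le_mul_of_one_le_left (hTpos _).le
        (by push_cast; linarith [Nat.cast_nonneg (α := ℝ) k]))
      htail.summable
  have hMs : Summable (fun (k:ℕ) => ((k:ℝ)+1) * T (k+1)) :=
    Summable.of_nonneg_of_le
      (fun k => mul_nonneg (by push_cast; linarith [Nat.cast_nonneg (α := ℝ) k]) (hTpos _).le)
      (fun k => mul_le_mul_of_nonneg_right
        (by push_cast; linarith [Nat.cast_nonneg (α := ℝ) k]) (hTpos _).le)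
      htail.summable
  set P := ∑' (k:ℕ), T (k+1) with hP
  set M := ∑' (k:ℕ), ((k:ℝ)+1) * T (k+1) with hM
  have hPpos : 0 < P := Summable.tsum_pos hPs (fun k => (hTpos _).le) 0 (hTpos 1)
  have hMnn : 0 ≤ M :=
    tsum_nonneg (fun k => mul_nonneg (by positivity) (hTpos _).le)
  have hMP : 2*M + P ≤ 1 := by
    have h4 : HasSum (fun (k:ℕ) => (2*((k:ℝ)+1)+1) * T (k+1)) (2*M + P) := by
      have := (hMs.hasSum.mul_left 2).add hPs.hasSum
      refine this.congr_fun fun k => ?_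
      ring
    have h5 : 2*M + P = L - 1 := h4.unique htail
    linarith
  have hopen : IsOpen unitDisc := by
    have h6 : unitDisc = (fun z : ℂ => ‖z‖) ⁻¹' (Set.Iio 1) := rfl
    rw [h6]
    exact continuous_norm.isOpen_preimage _ isOpen_Iio
  set F : ℂ → ℂ := fun z => z * hyp32 a (b : ℂ) (c : ℂ) ((b : ℂ) + 1) ((c : ℂ) + 1) z with hF
  have hhyp : ∀ z, hyp32 a (b : ℂ) (c : ℂ) ((b : ℂ) + 1) ((c : ℂ) + 1) z = SpAux.psum A z :=
    fun z => rfl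
  have hFeq : Set.EqOn F (SpAux.psum (SpAux.fco a b c)) unitDisc := by
    intro z hz
    have hz1 : ‖z‖ < 1 := hz
    have hsf := (SpAux.psum_hasSum hfc1 hz1).summable
    calc F z = z * SpAux.psum A z := rfl
      _ = ∑' n, z * (A n * z^n) := (tsum_mul_left).symm
      _ = ∑' n, SpAux.fco a b c (n+1) * z^(n+1) := tsum_congr fun n => by
          show z * (A n * z^n) = A n * z^(n+1)
          ring
      _ = SpAux.psum (SpAux.fco a b c) z := by
          rw [SpAux.psum]
          rw [Summable.tsum_eq_zero_add hsf]
          show _ = SpAux.fco a b c 0 * z^0 + _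
          simp [SpAux.fco]
  have hmem0 : (0:ℂ) ∈ unitDisc := by
    show ‖(0:ℂ)‖ < 1
    simp
  have hd0 : deriv F 0 = 1 := by
    have hFev0 : F =ᶠ[nhds 0] SpAux.psum (SpAux.fco a b c) :=
      Filter.eventuallyEq_of_mem (hopen.mem_nhds hmem0) hFeq
    rw [hFev0.deriv_eq]
    have h9 := SpAux.psum_hasSum_deriv hfc1 (z := 0) (by simpa using hmem0)
    have h10 := hasSum_single
      (f := fun (n : ℕ) => ((n:ℂ)+1) * SpAux.fco a b c (n+1) * (0:ℂ)^n) 0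
      (fun m hm => by
        obtain ⟨k, rfl⟩ := Nat.exists_eq_succ_of_ne_zero hm
        simp [pow_succ])
    have h11 := h9.unique h10
    rw [h11]
    simpa [SpAux.fco] using hA0
  have main : ∀ z ∈ unitDisc, z ≠ 0 → F z ≠ 0 ∧
      ‖z * deriv F z / F z - 1‖ < (z * deriv F z / F z).re := by
    intro z hz hz0
    have hz1 : ‖z‖ < 1 := hz
    set r := ‖z‖ with hr
    have hr0 : 0 < r := norm_pos_iff.2 hz0
    have hr1 : r < 1 := hz1
    set D := SpAux.psum A z with hD
    have hFz : F z = z * D := rfl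
    have hsA := SpAux.psum_hasSum hA1 hz1
    have htailD : HasSum (fun (n:ℕ) => A (n+1) * z^(n+1)) (D - 1) := by
      have h6 := (hasSum_nat_add_iff (f := fun (n:ℕ) => A n * z^n) (g := D - 1) 1)
      rw [Finset.sum_range_one] at h6
      apply h6.2
      have he : (D - 1) + A 0 * z^0 = D := by rw [hA0]; ring
      rwa [he]
    have hzn : ∀ n : ℕ, ‖z ^ (n+1)‖ ≤ r := by
      intro n
      rw [norm_pow, ← hr, pow_succ]
      calc r^n * r ≤ 1 * r := by
            apply mul_le_mul_of_nonneg_right _ hr0.le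
            exact pow_le_one₀ hr0.le hr1.le
        _ = r := one_mul r
    have hD1 : ‖D - 1‖ ≤ P * r := by
      have hDb : ∀ n : ℕ, ‖A (n+1) * z^(n+1)‖ ≤ T (n+1) * r := by
        intro n
        rw [norm_mul]
        exact mul_le_mul (hAT _) (hzn n) (norm_nonneg _) (hTpos _).le
      have hby := SpAux.hasSum_norm_le htailD (hPs.mul_right r) hDb
      rwa [tsum_mul_right] at hby
    -- derivative
    have hFev : F =ᶠ[nhds z] SpAux.psum (SpAux.fco a b c) :=
      Filter.eventuallyEq_of_mem (hopen.mem_nhds hz) hFeq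
    have hdF : deriv F z = deriv (SpAux.psum (SpAux.fco a b c)) z := hFev.deriv_eq
    have hsW : HasSum (fun (n:ℕ) => (n:ℂ) * A n * z^(n+1)) (z * deriv F z - F z) := by
      rw [hdF]
      have e1 := SpAux.psum_hasSum_mul_deriv hfc1 hz1
      have e2 : HasSum (fun (n:ℕ) => A n * z^(n+1)) (F z) := by
        rw [hFz]
        refine (hsA.mul_left z).congr_fun fun n => ?_
        ring
      refine (e1.sub e2).congr_fun fun n => ?_
      show (n:ℂ) * A n * z^(n+1) = ((n:ℂ)+1) * SpAux.fco a b c (n+1) * z^(n+1) - A n * z^(n+1)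
      have hfcoA : SpAux.fco a b c (n+1) = A n := rfl
      rw [hfcoA]
      ring
    have hWsummaj : Summable (fun (n:ℕ) => (n:ℝ) * T n * r) := by
      rw [← summable_nat_add_iff 1]
      refine (hMs.mul_right r).congr fun k => ?_
      push_cast
      ring
    have hWtsum : ∑' (n:ℕ), (n:ℝ) * T n * r = M * r := by
      rw [Summable.tsum_eq_zero_add hWsummaj]
      simp only [Nat.cast_zero, zero_mul, zero_add]
      rw [hM, ← tsum_mul_right]
      exact tsum_congr fun k => by push_cast; ring
    have hWb : ∀ n : ℕ, ‖(n:ℂ) * A n * z^(n+1)‖ ≤ (n:ℝ) * T n * r := by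
      intro n
      rw [norm_mul, norm_mul, Complex.norm_natCast]
      exact mul_le_mul (mul_le_mul_of_nonneg_left (hAT n) (Nat.cast_nonneg n)) (hzn n)
        (norm_nonneg _) (mul_nonneg (Nat.cast_nonneg n) (hTpos n).le)
    have hW : ‖z * deriv F z - F z‖ ≤ M * r := by
      have hby := SpAux.hasSum_norm_le hsW hWsummaj hWb
      rwa [hWtsum] at hby
    have hDlow : 1 - P * r ≤ ‖D‖ := by
      have h8 : ‖(1:ℂ)‖ - ‖(1:ℂ) - D‖ ≤ ‖(1:ℂ) - ((1:ℂ) - D)‖ := norm_sub_norm_le _ _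
      rw [norm_one] at h8
      have h9 : (1:ℂ) - ((1:ℂ) - D) = D := by ring
      rw [h9] at h8
      have h10 : ‖(1:ℂ) - D‖ = ‖D - 1‖ := norm_sub_rev _ _
      linarith
    have hPr : P * r < P := mul_lt_of_lt_one_right hPpos hr1
    have hMr : M * r ≤ M := mul_le_of_le_one_right hMnn hr1.le
    have hDpos : 0 < ‖D‖ := by linarith
    have hD0 : D ≠ 0 := by
      intro hcon
      rw [hcon, norm_zero] at hDpos
      exact lt_irrefl 0 hDpos
    have hF0 : F z ≠ 0 := by
      rw [hFz]
      exact mul_ne_zero hz0 hD0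
    refine ⟨hF0, ?_⟩
    have hFnorm : ‖F z‖ = r * ‖D‖ := by
      rw [hFz, norm_mul, ← hr]
    have hFpos : 0 < ‖F z‖ := by
      rw [hFnorm]
      exact mul_pos hr0 hDpos
    have hkey : 2 * ‖z * deriv F z - F z‖ < ‖F z‖ := by
      rw [hFnorm]
      have h12 : 2*M < 1 - P*r := by linarith
      calc 2 * ‖z * deriv F z - F z‖ ≤ 2 * (M * r) := by linarith
        _ = (2*M) * r := by ring
        _ < (1 - P*r) * r := mul_lt_mul_of_pos_right h12 hr0
        _ ≤ r * ‖D‖ := by rw [mul_comm]; exact mul_le_mul_of_nonneg_left hDlow hr0.le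
    set W := z * deriv F z - F z with hWdef
    have hq : z * deriv F z / F z = 1 + W / F z := by
      field_simp [hWdef]
      rw [hWdef]; ring
    have habsW : ‖W / F z‖ = ‖W‖ / ‖F z‖ := by
      rw [norm_div]
    have hx2 : 2 * (‖W‖ / ‖F z‖) < 1 := by
      rw [show 2 * (‖W‖ / ‖F z‖) = (2 * ‖W‖) / ‖F z‖ by ring, div_lt_one hFpos]
      exact hkey
    have hre : -‖W / F z‖ ≤ (W / F z).re := by
      have := Complex.abs_re_le_norm (W / F z)
      have := abs_le.1 this
      linarith [this.1]
    rw [hq]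
    have h13 : ‖1 + W / F z - 1‖ = ‖W‖ / ‖F z‖ := by
      rw [show (1:ℂ) + W / F z - 1 = W / F z by ring, habsW]
    rw [h13, Complex.add_re, Complex.one_re]
    rw [habsW] at hre
    linarith
  have hAn : AnalyticOnNhd ℂ F unitDisc := by
    intro z hz
    exact (SpAux.psum_analyticOnNhd hfc1 z hz).congr
      (Filter.eventuallyEq_of_mem (hopen.mem_nhds hz) hFeq).symm
  have hF00 : F 0 = 0 := by
    show (0:ℂ) * _ = 0
    rw [zero_mul]
  exact ⟨⟨hAn, hF00, hd0⟩, fun z hz hz0 => (main z hz hz0).1,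
    fun z hz hz0 => (main z hz hz0).2⟩

end
end
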